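/- For e ∈ (0,1), H₀ < 0, the averaged second component (1/(2π))∫₀^{2π} G₂(θ; e, θ₀) dθ equals f₂(e,θ₀) = (3e√(1−e²)·sin θ₀)/(16H₀³√(1+e cos θ₀)), where G₂ is given by the explicit formula in the paper involving sin θ times terms with (1+e cos(θ−θ₀))^{−3}. -/

import Mathlib

open Real

set_option maxHeartbeats 4000000 in
/-- The average over `[0, 2π]` of `G₂(θ; e, θ₀)` equals
`f₂(e,θ₀) = 3e√(1−e²) sin θ₀ / (16H₀³√(1+e cos θ₀))`. -/
theorem averaged_G2_equals_f2 (H₀ e θ₀ : ℝ) (hH : H₀ < 0) (he : 0 < e) (he1 : e < 1)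
    (G₂ : ℝ → ℝ)
    (hG₂ : ∀ θ, G₂ θ = Real.sin θ / (8 * Real.sqrt (1 + e * Real.cos θ₀)) *
      ((4 + (-1 + e ^ 2) ^ 3 / (H₀ ^ 3 * (1 + e * Real.cos (θ - θ₀)) ^ 3)
          + 16 * H₀ * Real.cos θ * (1 + e * Real.cos (θ - θ₀)) / (-1 + e ^ 2) *
            (1 - (-1 + e ^ 2) ^ 3 / (8 * H₀ ^ 3 * (1 + e * Real.cos (θ - θ₀)) ^ 3)))
        + 4 * H₀ * (4 * Real.cos θ + e * (Real.cos (2 * θ - θ₀) + 3 * Real.cos θ₀)) /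
            (-1 + e ^ 2) *
            (1 + (-1 + e ^ 2) ^ 3 / (4 * H₀ ^ 3 * (1 + e * Real.cos (θ - θ₀)) ^ 3)))) :
    (1 / (2 * π)) * ∫ θ in (0:ℝ)..(2 * π), G₂ θ =
      3 * e * Real.sqrt (1 - e ^ 2) * Real.sin θ₀ /
        (16 * H₀ ^ 3 * Real.sqrt (1 + e * Real.cos θ₀)) := by
  have hE : (0:ℝ) < 1 - e ^ 2 := by nlinarith
  have hHne : H₀ ≠ 0 := ne_of_lt hH
  have hene : e ≠ 0 := ne_of_gt he
  have hKne : (-1 + e ^ 2) ≠ 0 := by nlinarith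
  set s0 := Real.sin θ₀ with hs0def
  set c0 := Real.cos θ₀ with hc0def
  have h0 : s0 ^ 2 = 1 - c0 ^ 2 := by
    have h := Real.sin_sq_add_cos_sq θ₀
    rw [← hs0def, ← hc0def] at h; linarith
  have hQpos : (0:ℝ) < 1 + e * c0 := by
    rw [hc0def]; nlinarith [Real.neg_one_le_cos θ₀, Real.cos_le_one θ₀]
  set Q := Real.sqrt (1 + e * c0) with hQdef
  have hQ0 : 0 < Q := Real.sqrt_pos.mpr hQpos
  set r := Real.sqrt (1 - e ^ 2) with hrdef
  have hr0 : 0 < r := Real.sqrt_pos.mpr hE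
  have hr2 : r ^ 2 = 1 - e ^ 2 := Real.sq_sqrt hE.le
  set b := e / (1 + r) with hbdef
  have h1r : (0:ℝ) < 1 + r := by linarith
  have hb0 : 0 < b := div_pos he h1r
  have hb1 : b < 1 := by rw [hbdef, div_lt_one h1r]; linarith
  have hXcos : ∀ θ : ℝ, Real.cos θ * c0 + Real.sin θ * s0 = Real.cos (θ - θ₀) := by
    intro θ; rw [Real.cos_sub, hs0def, hc0def]
  have hDpos : ∀ θ : ℝ, 0 < 1 + e * (Real.cos θ * c0 + Real.sin θ * s0) := by
    intro θ; rw [hXcos θ]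
    nlinarith [Real.neg_one_le_cos (θ - θ₀), Real.cos_le_one (θ - θ₀)]
  have hBpos : ∀ θ : ℝ, 0 < 1 + b * (Real.cos θ * c0 + Real.sin θ * s0) := by
    intro θ; rw [hXcos θ]
    nlinarith [Real.neg_one_le_cos (θ - θ₀), Real.cos_le_one (θ - θ₀)]
  set a3 := 3 * e * r * s0 / (2 * H₀ ^ 3) with ha3
  set p1c := -(1 + 2 * e ^ 2) * (1 - e ^ 2) * s0 / (2 * H₀ ^ 3) with hp1c
  set p2c := -(1 - e ^ 2) ^ 2 * s0 / (2 * H₀ ^ 3) with hp2c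
  set p0c := -(1 - e ^ 2) ^ 3 * c0 / (2 * e * H₀ ^ 3) with hp0c
  set q1c := 2 * (1 - e ^ 2) ^ 2 * s0 * c0 / (e * H₀ ^ 2) with hq1c
  set q0c := 2 * (1 - e ^ 2) ^ 2 * (c0 ^ 2 - s0 ^ 2) / (e ^ 2 * H₀ ^ 2) with hq0c
  set q2c := -2 * (1 - e ^ 2) ^ 2 * s0 * c0 / (e * H₀ ^ 2) with hq2c
  set q3c := (1 - e ^ 2) ^ 2 * (-(c0 ^ 2 - s0 ^ 2) / e ^ 2 + c0 ^ 2) / H₀ ^ 2 with hq3c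
  set F : ℝ → ℝ := fun t =>
    ((-4) * Real.cos t + 8 * H₀ / (-1 + e ^ 2) *
        (1 - 2 * Real.cos t ^ 2 - e * c0 * Real.cos t ^ 3 - e * c0 * Real.cos t
          - e * s0 * (Real.sin t * Real.cos t ^ 2) + e * s0 * Real.sin t)
      + a3 * (t - 2 * Real.arctan (b * (Real.sin t * c0 - Real.cos t * s0) /
            (1 + b * (Real.cos t * c0 + Real.sin t * s0))))
      + p1c * (Real.sin t * c0 - Real.cos t * s0) /
          (1 + e * (Real.cos t * c0 + Real.sin t * s0))
      + (p2c * (Real.sin t * c0 - Real.cos t * s0) + p0c) /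
          (1 + e * (Real.cos t * c0 + Real.sin t * s0)) ^ 2
      + (q1c * (Real.sin t * c0 - Real.cos t * s0) + q0c) /
          (1 + e * (Real.cos t * c0 + Real.sin t * s0))
      + (q2c * (Real.sin t * c0 - Real.cos t * s0) + q3c) /
          (1 + e * (Real.cos t * c0 + Real.sin t * s0)) ^ 2) / (8 * Q) with hF
  have hderiv : ∀ θ : ℝ, HasDerivAt F (G₂ θ) θ := by
    intro θ
    have hDp := hDpos θ
    have hBp := hBpos θ
    have hsin := Real.hasDerivAt_sin θ
    have hcos := Real.hasDerivAt_cos θ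
    set s := Real.sin θ with hsdef
    set c := Real.cos θ with hcdef
    have hssq : s ^ 2 = 1 - c ^ 2 := by
      have h := Real.sin_sq_add_cos_sq θ
      rw [← hsdef, ← hcdef] at h; linarith
    have hDne : (1 + e * (c * c0 + s * s0)) ≠ 0 := ne_of_gt hDp
    have hX : HasDerivAt (fun t => Real.cos t * c0 + Real.sin t * s0) (-s * c0 + c * s0) θ :=
      (hcos.mul_const c0).add (hsin.mul_const s0)
    have hY : HasDerivAt (fun t => Real.sin t * c0 - Real.cos t * s0) (c * c0 - -s * s0) θ :=
      (hsin.mul_const c0).sub (hcos.mul_const s0)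
    have hDd : HasDerivAt (fun t => 1 + e * (Real.cos t * c0 + Real.sin t * s0))
        (e * (-s * c0 + c * s0)) θ := (hX.const_mul e).const_add 1
    have hP : HasDerivAt (fun t => (-4) * Real.cos t + 8 * H₀ / (-1 + e ^ 2) *
        (1 - 2 * Real.cos t ^ 2 - e * c0 * Real.cos t ^ 3 - e * c0 * Real.cos t
          - e * s0 * (Real.sin t * Real.cos t ^ 2) + e * s0 * Real.sin t))
        ((-4) * (-s) + 8 * H₀ / (-1 + e ^ 2) *
          (-(2 * ((2:ℝ) * c ^ 1 * (-s))) - e * c0 * ((3:ℝ) * c ^ 2 * (-s)) - e * c0 * (-s)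
            - e * s0 * (c * c ^ 2 + s * ((2:ℝ) * c ^ 1 * (-s))) + e * s0 * c)) θ := by
      have hin : HasDerivAt (fun t => 1 - 2 * Real.cos t ^ 2 - e * c0 * Real.cos t ^ 3
          - e * c0 * Real.cos t - e * s0 * (Real.sin t * Real.cos t ^ 2) + e * s0 * Real.sin t)
          (-(2 * ((2:ℝ) * c ^ 1 * (-s))) - e * c0 * ((3:ℝ) * c ^ 2 * (-s)) - e * c0 * (-s)
            - e * s0 * (c * c ^ 2 + s * ((2:ℝ) * c ^ 1 * (-s))) + e * s0 * c) θ := by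
        have t2 : HasDerivAt (fun t => Real.cos t ^ 2) ((2:ℝ) * c ^ 1 * (-s)) θ := by
          have := hcos.pow 2; norm_num at this ⊢; convert this using 1 <;> rfl
        have t3 : HasDerivAt (fun t => Real.cos t ^ 3) ((3:ℝ) * c ^ 2 * (-s)) θ := by
          have := hcos.pow 3; norm_num at this ⊢; convert this using 1 <;> rfl
        exact (((((t2.const_mul 2).const_sub 1).sub (t3.const_mul (e * c0))).sub
          (hcos.const_mul (e * c0))).sub ((hsin.mul t2).const_mul (e * s0))).add
          (hsin.const_mul (e * s0))
      exact (hcos.const_mul (-4)).add (hin.const_mul (8 * H₀ / (-1 + e ^ 2)))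
    have hW : HasDerivAt (fun t => b * (Real.sin t * c0 - Real.cos t * s0) /
        (1 + b * (Real.cos t * c0 + Real.sin t * s0)))
        ((b * (c * c0 - -s * s0) * (1 + b * (c * c0 + s * s0))
          - b * (s * c0 - c * s0) * (b * (-s * c0 + c * s0)))
          / (1 + b * (c * c0 + s * s0)) ^ 2) θ :=
      (hY.const_mul b).div ((hX.const_mul b).const_add 1) (ne_of_gt hBp)
    have harc : HasDerivAt (fun t => t - 2 * Real.arctan (b * (Real.sin t * c0 - Real.cos t * s0) /
        (1 + b * (Real.cos t * c0 + Real.sin t * s0))))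
        (r / (1 + e * (c * c0 + s * s0))) θ := by
      have h1 := (hasDerivAt_id θ).sub ((hW.arctan).const_mul 2)
      refine h1.congr_deriv (Eq.symm ?_)
      have hBne : (1 + b * (c * c0 + s * s0)) ≠ 0 := ne_of_gt hBp
      have hne2 : (1 + r + e * (c * c0 + s * s0)) ≠ 0 := by nlinarith [hDp, hr0]
      rw [hbdef, ← hsdef, ← hcdef]
      have hZ : ((1 + r + e * (c * c0 + s * s0)) ^ 2 + e ^ 2 * (s * c0 - c * s0) ^ 2) ≠ 0 := by
        have hN : 0 < (1 + r + e * (c * c0 + s * s0)) := by linarith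
        positivity
      have hW2 : (1 + (e / (1 + r) * (s * c0 - c * s0) / (1 + e / (1 + r) * (c * c0 + s * s0))) ^ 2) ≠ 0 := by positivity
      set_option maxRecDepth 100000 in
      linear_combination (norm := skip) (1 / ((1 + e * (c * c0 + s * s0)) * (1 + r + e * (c * c0 + s * s0)) ^ 2 * ((1 + r + e * (c * c0 + s * s0)) ^ 2 + e ^ 2 * (s * c0 - c * s0) ^ 2) * (1 + r) ^ 2)) * (((1) + (5)*r + (10)*r^2 + (10)*r^3 + (5)*r^4 + (1)*r^5 + (3)*e*c*c0 + (3)*e*s*s0 + (12)*e*r*c*c0 + (12)*e*r*s*s0 + (18)*e*r^2*c*c0 + (18)*e*r^2*s*s0 + (12)*e*r^3*c*c0 + (12)*e*r^3*s*s0 + (3)*e*r^4*c*c0 + (3)*e*r^4*s*s0 + (-15)*e^2 + (18)*e^2*c^2*c0^2 + (15)*e^2*c^2*s0^2 + (6)*e^2*s*c*s0*c0 + (15)*e^2*s^2*c0^2 + (18)*e^2*s^2*s0^2 + (-11)*e^2*r + (20)*e^2*r*c^2*c0^2 + (11)*e^2*r*c^2*s0^2 + (18)*e^2*r*s*c*s0*c0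 + (11)*e^2*r*s^2*c0^2 + (20)*e^2*r*s^2*s0^2 + (-5)*e^2*r^2 + (14)*e^2*r^2*c^2*c0^2 + (5)*e^2*r^2*c^2*s0^2 + (18)*e^2*r^2*s*c*s0*c0 + (5)*e^2*r^2*s^2*c0^2 + (14)*e^2*r^2*s^2*s0^2 + (-1)*e^2*r^3 + (4)*e^2*r^3*c^2*c0^2 + (1)*e^2*r^3*c^2*s0^2 + (6)*e^2*r^3*s*c*s0*c0 + (1)*e^2*r^3*s^2*c0^2 + (4)*e^2*r^3*s^2*s0^2 + (-21)*e^3*c*c0 + (22)*e^3*c^3*c0^3 + (21)*e^3*c^3*s0^2*c0 + (-21)*e^3*s*s0 + (24)*e^3*s*c^2*s0*c0^2 + (21)*e^3*s*c^2*s0^3 + (21)*e^3*s^2*c*c0^3 + (24)*e^3*s^2*c*s0^2*c0 + (21)*e^3*s^3*s0*c0^2 + (22)*e^3*s^3*s0^3 + (-12)*e^3*r*c*c0 + (14)*e^3*r*c^3*c0^3 + (12)*e^3*r*c^3*s0^2*c0 + (-12)*e^3*r*s*s0 + (18)*e^3*r*s*c^2*s0*c0^2 + (12)*e^3*r*s*c^2*s0^3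 + (12)*e^3*r*s^2*c*c0^3 + (18)*e^3*r*s^2*c*s0^2*c0 + (12)*e^3*r*s^3*s0*c0^2 + (14)*e^3*r*s^3*s0^3 + (-3)*e^3*r^2*c*c0 + (4)*e^3*r^2*c^3*c0^3 + (3)*e^3*r^2*c^3*s0^2*c0 + (-3)*e^3*r^2*s*s0 + (6)*e^3*r^2*s*c^2*s0*c0^2 + (3)*e^3*r^2*s*c^2*s0^3 + (3)*e^3*r^2*s^2*c*c0^3 + (6)*e^3*r^2*s^2*c*s0^2*c0 + (3)*e^3*r^2*s^3*s0*c0^2 + (4)*e^3*r^2*s^3*s0^3 + (5)*e^4 + (-14)*e^4*c^2*c0^2 + (-5)*e^4*c^2*s0^2 + (9)*e^4*c^4*c0^4 + (9)*e^4*c^4*s0^2*c0^2 + (-18)*e^4*s*c*s0*c0 + (18)*e^4*s*c^3*s0*c0^3 + (18)*e^4*s*c^3*s0^3*c0 + (-5)*e^4*s^2*c0^2 + (-14)*e^4*s^2*s0^2 + (9)*e^4*s^2*c^2*c0^4 + (18)*e^4*s^2*c^2*s0^2*c0^2 + (9)*e^4*s^2*c^2*s0^4 + (18)*e^4*s^3*c*s0*c0^3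 + (18)*e^4*s^3*c*s0^3*c0 + (9)*e^4*s^4*s0^2*c0^2 + (9)*e^4*s^4*s0^4 + (1)*e^4*r + (-4)*e^4*r*c^2*c0^2 + (-1)*e^4*r*c^2*s0^2 + (3)*e^4*r*c^4*c0^4 + (3)*e^4*r*c^4*s0^2*c0^2 + (-6)*e^4*r*s*c*s0*c0 + (6)*e^4*r*s*c^3*s0*c0^3 + (6)*e^4*r*s*c^3*s0^3*c0 + (-1)*e^4*r*s^2*c0^2 + (-4)*e^4*r*s^2*s0^2 + (3)*e^4*r*s^2*c^2*c0^4 + (6)*e^4*r*s^2*c^2*s0^2*c0^2 + (3)*e^4*r*s^2*c^2*s0^4 + (6)*e^4*r*s^3*c*s0*c0^3 + (6)*e^4*r*s^3*c*s0^3*c0 + (3)*e^4*r*s^4*s0^2*c0^2 + (3)*e^4*r*s^4*s0^4 + (3)*e^5*c*c0 + (-4)*e^5*c^3*c0^3 + (-3)*e^5*c^3*s0^2*c0 + (1)*e^5*c^5*c0^5 + (1)*e^5*c^5*s0^2*c0^3 + (3)*e^5*s*s0 + (-6)*e^5*s*c^2*s0*c0^2 + (-3)*e^5*s*c^2*s0^3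 + (3)*e^5*s*c^4*s0*c0^4 + (3)*e^5*s*c^4*s0^3*c0^2 + (-3)*e^5*s^2*c*c0^3 + (-6)*e^5*s^2*c*s0^2*c0 + (1)*e^5*s^2*c^3*c0^5 + (4)*e^5*s^2*c^3*s0^2*c0^3 + (3)*e^5*s^2*c^3*s0^4*c0 + (-3)*e^5*s^3*s0*c0^2 + (-4)*e^5*s^3*s0^3 + (3)*e^5*s^3*c^2*s0*c0^4 + (4)*e^5*s^3*c^2*s0^3*c0^2 + (1)*e^5*s^3*c^2*s0^5 + (3)*e^5*s^4*c*s0^2*c0^3 + (3)*e^5*s^4*c*s0^4*c0 + (1)*e^5*s^5*s0^3*c0^2 + (1)*e^5*s^5*s0^5) * hr2 + ((16)*e^2*c0^2 + (16)*e^2*s0^2 + (16)*e^2*r*c0^2 + (16)*e^2*r*s0^2 + (24)*e^3*c*c0^3 + (24)*e^3*c*s0^2*c0 + (24)*e^3*s*s0*c0^2 + (24)*e^3*s*s0^3 + (24)*e^3*r*c*c0^3 + (24)*e^3*r*c*s0^2*c0 + (24)*e^3*r*s*s0*c0^2 + (24)*e^3*r*s*s0^3 + (-20)*e^4*c0^2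 + (-32)*e^4*s0^2 + (12)*e^4*s0^2*c0^2 + (12)*e^4*s0^4 + (12)*e^4*c^2*c0^4 + (12)*e^4*c^2*s0^2*c0^2 + (24)*e^4*s*c*s0*c0^3 + (24)*e^4*s*c*s0^3*c0 + (12)*e^4*s^2*s0^2*c0^2 + (12)*e^4*s^2*s0^4 + (-12)*e^4*r*c0^2 + (-24)*e^4*r*s0^2 + (12)*e^4*r*s0^2*c0^2 + (12)*e^4*r*s0^4 + (12)*e^4*r*c^2*c0^4 + (12)*e^4*r*c^2*s0^2*c0^2 + (24)*e^4*r*s*c*s0*c0^3 + (24)*e^4*r*s*c*s0^3*c0 + (12)*e^4*r*s^2*s0^2*c0^2 + (12)*e^4*r*s^2*s0^4 + (-24)*e^5*c*c0^3 + (-30)*e^5*c*s0^2*c0 + (6)*e^5*c*s0^2*c0^3 + (6)*e^5*c*s0^4*c0 + (2)*e^5*c^3*c0^5 + (2)*e^5*c^3*s0^2*c0^3 + (-24)*e^5*s*s0*c0^2 + (-26)*e^5*s*s0^3 + (2)*e^5*s*s0^3*c0^2 + (2)*e^5*s*s0^5 + (6)*e^5*s*c^2*s0*c0^4 + (6)*e^5*s*c^2*s0^3*c0^2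 + (6)*e^5*s^2*c*s0^2*c0^3 + (6)*e^5*s^2*c*s0^4*c0 + (2)*e^5*s^3*s0^3*c0^2 + (2)*e^5*s^3*s0^5 + (-12)*e^5*r*c*c0^3 + (-18)*e^5*r*c*s0^2*c0 + (6)*e^5*r*c*s0^2*c0^3 + (6)*e^5*r*c*s0^4*c0 + (2)*e^5*r*c^3*c0^5 + (2)*e^5*r*c^3*s0^2*c0^3 + (-12)*e^5*r*s*s0*c0^2 + (-14)*e^5*r*s*s0^3 + (2)*e^5*r*s*s0^3*c0^2 + (2)*e^5*r*s*s0^5 + (6)*e^5*r*s*c^2*s0*c0^4 + (6)*e^5*r*s*c^2*s0^3*c0^2 + (6)*e^5*r*s^2*c*s0^2*c0^3 + (6)*e^5*r*s^2*c*s0^4*c0 + (2)*e^5*r*s^3*s0^3*c0^2 + (2)*e^5*r*s^3*s0^5 + (5)*e^6*c0^2 + (14)*e^6*s0^2 + (-9)*e^6*s0^2*c0^2 + (-9)*e^6*s0^4 + (-9)*e^6*c^2*c0^4 + (-9)*e^6*c^2*s0^2*c0^2 + (-18)*e^6*s*c*s0*c0^3 + (-18)*e^6*s*c*s0^3*c0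 + (-9)*e^6*s^2*s0^2*c0^2 + (-9)*e^6*s^2*s0^4 + (1)*e^6*r*c0^2 + (4)*e^6*r*s0^2 + (-3)*e^6*r*s0^2*c0^2 + (-3)*e^6*r*s0^4 + (-3)*e^6*r*c^2*c0^4 + (-3)*e^6*r*c^2*s0^2*c0^2 + (-6)*e^6*r*s*c*s0*c0^3 + (-6)*e^6*r*s*c*s0^3*c0 + (-3)*e^6*r*s^2*s0^2*c0^2 + (-3)*e^6*r*s^2*s0^4 + (3)*e^7*c*c0^3 + (6)*e^7*c*s0^2*c0 + (-3)*e^7*c*s0^2*c0^3 + (-3)*e^7*c*s0^4*c0 + (-1)*e^7*c^3*c0^5 + (-1)*e^7*c^3*s0^2*c0^3 + (3)*e^7*s*s0*c0^2 + (4)*e^7*s*s0^3 + (-1)*e^7*s*s0^3*c0^2 + (-1)*e^7*s*s0^5 + (-3)*e^7*s*c^2*s0*c0^4 + (-3)*e^7*s*c^2*s0^3*c0^2 + (-3)*e^7*s^2*c*s0^2*c0^3 + (-3)*e^7*s^2*c*s0^4*c0 + (-1)*e^7*s^3*s0^3*c0^2 + (-1)*e^7*s^3*s0^5) * hssq + ((16)*e^2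 + (16)*e^2*r + (24)*e^3*c*c0 + (24)*e^3*s*s0 + (24)*e^3*r*c*c0 + (24)*e^3*r*s*s0 + (-20)*e^4 + (12)*e^4*s0^2 + (12)*e^4*c^2*c0^2 + (-12)*e^4*c^2*s0^2 + (24)*e^4*s*c*s0*c0 + (-12)*e^4*r + (12)*e^4*r*s0^2 + (12)*e^4*r*c^2*c0^2 + (-12)*e^4*r*c^2*s0^2 + (24)*e^4*r*s*c*s0*c0 + (-24)*e^5*c*c0 + (6)*e^5*c*s0^2*c0 + (2)*e^5*c^3*c0^3 + (-6)*e^5*c^3*s0^2*c0 + (-24)*e^5*s*s0 + (2)*e^5*s*s0^3 + (6)*e^5*s*c^2*s0*c0^2 + (-2)*e^5*s*c^2*s0^3 + (-12)*e^5*r*c*c0 + (6)*e^5*r*c*s0^2*c0 + (2)*e^5*r*c^3*c0^3 + (-6)*e^5*r*c^3*s0^2*c0 + (-12)*e^5*r*s*s0 + (2)*e^5*r*s*s0^3 + (6)*e^5*r*s*c^2*s0*c0^2 + (-2)*e^5*r*s*c^2*s0^3 + (5)*e^6 + (-9)*e^6*s0^2 + (-9)*e^6*c^2*c0^2 + (9)*e^6*c^2*s0^2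 + (-18)*e^6*s*c*s0*c0 + (1)*e^6*r + (-3)*e^6*r*s0^2 + (-3)*e^6*r*c^2*c0^2 + (3)*e^6*r*c^2*s0^2 + (-6)*e^6*r*s*c*s0*c0 + (3)*e^7*c*c0 + (-3)*e^7*c*s0^2*c0 + (-1)*e^7*c^3*c0^3 + (3)*e^7*c^3*s0^2*c0 + (3)*e^7*s*s0 + (-1)*e^7*s*s0^3 + (-3)*e^7*s*c^2*s0*c0^2 + (1)*e^7*s*c^2*s0^3) * h0)
      field_simp [h1r.ne', hne2, hZ, hW2, hDne]
      ring
    have harc2 : HasDerivAt (fun t => a3 * (t - 2 * Real.arctan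
        (b * (Real.sin t * c0 - Real.cos t * s0) /
          (1 + b * (Real.cos t * c0 + Real.sin t * s0)))))
        (3 * e * (1 - e ^ 2) * s0 / (2 * H₀ ^ 3) * (1 / (1 + e * (c * c0 + s * s0)))) θ := by
      have h1 := harc.const_mul a3
      refine h1.congr_deriv (Eq.symm ?_)
      have hrr : r * r = 1 - e ^ 2 := by rw [← hr2]; ring
      rw [ha3, ← hrr]
      ring
    have hq1 : HasDerivAt (fun t => p1c * (Real.sin t * c0 - Real.cos t * s0) /
        (1 + e * (Real.cos t * c0 + Real.sin t * s0)))
        ((p1c * (c * c0 - -s * s0) * (1 + e * (c * c0 + s * s0))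
          - p1c * (s * c0 - c * s0) * (e * (-s * c0 + c * s0)))
          / (1 + e * (c * c0 + s * s0)) ^ 2) θ :=
      (hY.const_mul p1c).div hDd hDne
    have hq2 : HasDerivAt (fun t => (p2c * (Real.sin t * c0 - Real.cos t * s0) + p0c) /
        (1 + e * (Real.cos t * c0 + Real.sin t * s0)) ^ 2)
        ((p2c * (c * c0 - -s * s0) * (1 + e * (c * c0 + s * s0)) ^ 2
          - (p2c * (s * c0 - c * s0) + p0c) *
            ((2:ℝ) * (1 + e * (c * c0 + s * s0)) ^ 1 * (e * (-s * c0 + c * s0))))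
          / ((1 + e * (c * c0 + s * s0)) ^ 2) ^ 2) θ := by
      have h1 := ((hY.const_mul p2c).add_const p0c).div (hDd.pow 2) (pow_ne_zero 2 hDne)
      convert h1 using 2 <;> rfl
    have hq3 : HasDerivAt (fun t => (q1c * (Real.sin t * c0 - Real.cos t * s0) + q0c) /
        (1 + e * (Real.cos t * c0 + Real.sin t * s0)))
        ((q1c * (c * c0 - -s * s0) * (1 + e * (c * c0 + s * s0))
          - (q1c * (s * c0 - c * s0) + q0c) * (e * (-s * c0 + c * s0)))
          / (1 + e * (c * c0 + s * s0)) ^ 2) θ :=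
      ((hY.const_mul q1c).add_const q0c).div hDd hDne
    have hq4 : HasDerivAt (fun t => (q2c * (Real.sin t * c0 - Real.cos t * s0) + q3c) /
        (1 + e * (Real.cos t * c0 + Real.sin t * s0)) ^ 2)
        ((q2c * (c * c0 - -s * s0) * (1 + e * (c * c0 + s * s0)) ^ 2
          - (q2c * (s * c0 - c * s0) + q3c) *
            ((2:ℝ) * (1 + e * (c * c0 + s * s0)) ^ 1 * (e * (-s * c0 + c * s0))))
          / ((1 + e * (c * c0 + s * s0)) ^ 2) ^ 2) θ := by
      have h1 := ((hY.const_mul q2c).add_const q3c).div (hDd.pow 2) (pow_ne_zero 2 hDne)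
      convert h1 using 2 <;> rfl
    have hbig := (((((hP.add harc2).add hq1).add hq2).add hq3).add hq4).div_const (8 * Q)
    rw [hF]
    refine hbig.congr_deriv (Eq.symm ?_)
    rw [hG₂ θ]
    rw [Real.cos_sub, Real.cos_sub, Real.cos_two_mul, Real.sin_two_mul]
    rw [← hsdef, ← hcdef, ← hs0def, ← hc0def]
    have hA : s * (4 + 16 * H₀ * c * (1 + e * (c * c0 + s * s0)) / (-1 + e ^ 2)
        + 4 * H₀ * (4 * c + e * ((2 * c ^ 2 - 1) * c0 + 2 * s * c * s0 + 3 * c0)) / (-1 + e ^ 2))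
        = (-4) * (-s) + 8 * H₀ / (-1 + e ^ 2) *
          (-(2 * ((2:ℝ) * c ^ 1 * (-s))) - e * c0 * ((3:ℝ) * c ^ 2 * (-s)) - e * c0 * (-s)
            - e * s0 * (c * c ^ 2 + s * ((2:ℝ) * c ^ 1 * (-s))) + e * s0 * c) := by
      field_simp
      linear_combination ((8)*e*H₀*c*s0) * hssq
    have hBkey : (-(1 + 2 * e ^ 2) * (1 - e ^ 2) * s0 * e * (c * c0 + s * s0) *
          (1 + e * (c * c0 + s * s0))
        - -(1 + 2 * e ^ 2) * (1 - e ^ 2) * s0 * e * (s * c0 - c * s0) *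
          (e * (-(s * c0) + c * s0))) * (1 + e * (c * c0 + s * s0)) ^ 2
        + (-(1 - e ^ 2) ^ 2 * s0 * e * (c * c0 + s * s0)) * (1 + e * (c * c0 + s * s0)) ^ 2
        - (-(1 - e ^ 2) ^ 2 * s0 * e * (s * c0 - c * s0) + -(1 - e ^ 2) ^ 3 * c0) *
          (2 * (1 + e * (c * c0 + s * s0)) * (e * (-(s * c0) + c * s0)))
        + 3 * e * (1 - e ^ 2) * s0 * e * (1 + e * (c * c0 + s * s0)) ^ 3
        = s * (-1 + e ^ 2) ^ 3 * (2 * e) * (1 + e * (c * c0 + s * s0)) := by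
      linear_combination ((2)*e^2*s0 + (-5)*e^2*s0*c0^2 + (-5)*e^2*s0^3 + (-4)*e^3*c*s0*c0^3 + (-4)*e^3*c*s0^3*c0 + (-4)*e^3*s*s0^2*c0^2 + (-4)*e^3*s*s0^4 + (-6)*e^4*s0 + (9)*e^4*s0*c0^2 + (10)*e^4*s0^3 + (-1)*e^4*s0^3*c0^2 + (-1)*e^4*s0^5 + (-1)*e^4*c^2*s0*c0^4 + (-1)*e^4*c^2*s0^3*c0^2 + (-2)*e^4*s*c*s0^2*c0^3 + (-2)*e^4*s*c*s0^4*c0 + (-1)*e^4*s^2*s0^3*c0^2 + (-1)*e^4*s^2*s0^5 + (2)*e^5*c*s0*c0^3 + (2)*e^5*c*s0^3*c0 + (2)*e^5*s*s0^2*c0^2 + (2)*e^5*s*s0^4 + (6)*e^6*s0 + (-6)*e^6*s0*c0^2 + (-5)*e^6*s0^3 + (-1)*e^6*s0^3*c0^2 + (-1)*e^6*s0^5 + (-1)*e^6*c^2*s0*c0^4 + (-1)*e^6*c^2*s0^3*c0^2 + (-2)*e^6*s*c*s0^2*c0^3 + (-2)*e^6*s*c*s0^4*c0 + (-1)*e^6*s^2*s0^3*c0^2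 + (-1)*e^6*s^2*s0^5 + (2)*e^7*c*s0*c0^3 + (2)*e^7*c*s0^3*c0 + (2)*e^7*s*s0^2*c0^2 + (2)*e^7*s*s0^4 + (-2)*e^8*s0 + (2)*e^8*s0*c0^2 + (2)*e^8*s0^3*c0^2 + (2)*e^8*s0^5 + (2)*e^8*c^2*s0*c0^4 + (2)*e^8*c^2*s0^3*c0^2 + (4)*e^8*s*c*s0^2*c0^3 + (4)*e^8*s*c*s0^4*c0 + (2)*e^8*s^2*s0^3*c0^2 + (2)*e^8*s^2*s0^5) * hssq + ((-2)*e*s + (-5)*e^2*s0 + (2)*e^2*c^2*s0 + (-2)*e^2*s*c*c0 + (-4)*e^3*c*s0*c0 + (6)*e^3*s + (-4)*e^3*s*s0^2 + (9)*e^4*s0 + (-1)*e^4*s0^3 + (-6)*e^4*c^2*s0 + (-1)*e^4*c^2*s0*c0^2 + (1)*e^4*c^2*s0^3 + (6)*e^4*s*c*c0 + (-2)*e^4*s*c*s0^2*c0 + (2)*e^5*c*s0*c0 + (-6)*e^5*s + (2)*e^5*s*s0^2 + (-6)*e^6*s0 + (-1)*e^6*s0^3 + (6)*e^6*c^2*s0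 + (-1)*e^6*c^2*s0*c0^2 + (1)*e^6*c^2*s0^3 + (-6)*e^6*s*c*c0 + (-2)*e^6*s*c*s0^2*c0 + (2)*e^7*c*s0*c0 + (2)*e^7*s + (2)*e^7*s*s0^2 + (2)*e^8*s0 + (2)*e^8*s0^3 + (-2)*e^8*c^2*s0 + (2)*e^8*c^2*s0*c0^2 + (-2)*e^8*c^2*s0^3 + (2)*e^8*s*c*c0 + (4)*e^8*s*c*s0^2*c0) * h0
    have hB : s * (-1 + e ^ 2) ^ 3 / (H₀ ^ 3 * (1 + e * (c * c0 + s * s0)) ^ 3)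
        = 3 * e * (1 - e ^ 2) * s0 / (2 * H₀ ^ 3) * (1 / (1 + e * (c * c0 + s * s0)))
        + (p1c * (c * c0 - -s * s0) * (1 + e * (c * c0 + s * s0))
          - p1c * (s * c0 - c * s0) * (e * (-s * c0 + c * s0)))
          / (1 + e * (c * c0 + s * s0)) ^ 2
        + (p2c * (c * c0 - -s * s0) * (1 + e * (c * c0 + s * s0)) ^ 2
          - (p2c * (s * c0 - c * s0) + p0c) *
            ((2:ℝ) * (1 + e * (c * c0 + s * s0)) ^ 1 * (e * (-s * c0 + c * s0))))
          / ((1 + e * (c * c0 + s * s0)) ^ 2) ^ 2 := by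
      rw [hp1c, hp2c, hp0c]
      set_option maxRecDepth 100000 in
      linear_combination (norm := skip) (-1 / (2 * e * H₀ ^ 3 * (1 + e * (c * c0 + s * s0)) ^ 4)) * hBkey
      field_simp
      ring
    have hCkey : ((2 * (1 - e ^ 2) ^ 2 * s0 * c0 * e * (c * c0 + s * s0)) *
          (1 + e * (c * c0 + s * s0))
        - (2 * (1 - e ^ 2) ^ 2 * s0 * c0 * e * (s * c0 - c * s0)
            + 2 * (1 - e ^ 2) ^ 2 * (c0 ^ 2 - s0 ^ 2)) * (e * (-(s * c0) + c * s0))) *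
          (1 + e * (c * c0 + s * s0)) ^ 2
        + (-2 * (1 - e ^ 2) ^ 2 * s0 * c0 * e * (c * c0 + s * s0)) *
          (1 + e * (c * c0 + s * s0)) ^ 2
        - (-2 * (1 - e ^ 2) ^ 2 * s0 * c0 * e * (s * c0 - c * s0)
            + (1 - e ^ 2) ^ 2 * (-(c0 ^ 2 - s0 ^ 2) + c0 ^ 2 * e ^ 2)) *
          (2 * (1 + e * (c * c0 + s * s0)) * (e * (-(s * c0) + c * s0)))
        = (1 - e ^ 2) ^ 2 * s * (-2 * c * e ^ 2 * (1 + e * (c * c0 + s * s0)) ^ 2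
          + (4 * c + e * ((2 * c ^ 2 - 1) * c0 + 2 * s * c * s0 + 3 * c0)) * e ^ 2 *
            (1 + e * (c * c0 + s * s0))) := by
      linear_combination ((-2)*e^3*c*s0 + (4)*e^3*c*s0*c0^4 + (6)*e^3*c*s0^3*c0^2 + (2)*e^3*c*s0^5 + (2)*e^3*s*s0^2*c0^3 + (2)*e^3*s*s0^4*c0 + (-2)*e^4*s0*c0 + (2)*e^4*s0*c0^3 + (2)*e^4*s0^3*c0^3 + (2)*e^4*s0^5*c0 + (2)*e^4*c^2*s0*c0^5 + (2)*e^4*c^2*s0^3*c0^3 + (4)*e^4*s*c*s0^2*c0^4 + (4)*e^4*s*c*s0^4*c0^2 + (2)*e^4*s^2*s0^3*c0^3 + (2)*e^4*s^2*s0^5*c0 + (4)*e^5*c*s0 + (-8)*e^5*c*s0*c0^4 + (-12)*e^5*c*s0^3*c0^2 + (-4)*e^5*c*s0^5 + (-4)*e^5*s*s0^2*c0^3 + (-4)*e^5*s*s0^4*c0 + (4)*e^6*s0*c0 + (-4)*e^6*s0*c0^3 + (-4)*e^6*s0^3*c0^3 + (-4)*e^6*s0^5*c0 + (-4)*e^6*c^2*s0*c0^5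 + (-4)*e^6*c^2*s0^3*c0^3 + (-8)*e^6*s*c*s0^2*c0^4 + (-8)*e^6*s*c*s0^4*c0^2 + (-4)*e^6*s^2*s0^3*c0^3 + (-4)*e^6*s^2*s0^5*c0 + (-2)*e^7*c*s0 + (4)*e^7*c*s0*c0^4 + (6)*e^7*c*s0^3*c0^2 + (2)*e^7*c*s0^5 + (2)*e^7*s*s0^2*c0^3 + (2)*e^7*s*s0^4*c0 + (-2)*e^8*s0*c0 + (2)*e^8*s0*c0^3 + (2)*e^8*s0^3*c0^3 + (2)*e^8*s0^5*c0 + (2)*e^8*c^2*s0*c0^5 + (2)*e^8*c^2*s0^3*c0^3 + (4)*e^8*s*c*s0^2*c0^4 + (4)*e^8*s*c*s0^4*c0^2 + (2)*e^8*s^2*s0^3*c0^3 + (2)*e^8*s^2*s0^5*c0) * hssq + ((2)*e^2*s*c + (2)*e^2*s*c*c0^2 + (2)*e^2*s*c*s0^2 + (2)*e^3*c*s0 + (4)*e^3*c*s0*c0^2 + (2)*e^3*c*s0^3 + (-2)*e^3*c^3*s0 + (-2)*e^3*c^3*s0*c0^2 + (-2)*e^3*c^3*s0^3 + (2)*e^3*s*c0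 + (2)*e^3*s*s0^2*c0 + (2)*e^3*s*c^2*c0 + (2)*e^3*s*c^2*c0^3 + (2)*e^3*s*c^2*s0^2*c0 + (2)*e^4*s0*c0 + (2)*e^4*s0^3*c0 + (-2)*e^4*c^2*s0*c0 + (2)*e^4*c^2*s0*c0^3 + (-2)*e^4*c^2*s0^3*c0 + (-4)*e^4*s*c + (-2)*e^4*s*c*c0^2 + (-4)*e^4*s*c*s0^2 + (4)*e^4*s*c*s0^2*c0^2 + (-4)*e^5*c*s0 + (-8)*e^5*c*s0*c0^2 + (-4)*e^5*c*s0^3 + (4)*e^5*c^3*s0 + (4)*e^5*c^3*s0*c0^2 + (4)*e^5*c^3*s0^3 + (-4)*e^5*s*c0 + (-4)*e^5*s*s0^2*c0 + (-4)*e^5*s*c^2*c0 + (-4)*e^5*s*c^2*c0^3 + (-4)*e^5*s*c^2*s0^2*c0 + (-4)*e^6*s0*c0 + (-4)*e^6*s0^3*c0 + (4)*e^6*c^2*s0*c0 + (-4)*e^6*c^2*s0*c0^3 + (4)*e^6*c^2*s0^3*c0 + (2)*e^6*s*c + (-2)*e^6*s*c*c0^2 + (2)*e^6*s*c*s0^2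 + (-8)*e^6*s*c*s0^2*c0^2 + (2)*e^7*c*s0 + (4)*e^7*c*s0*c0^2 + (2)*e^7*c*s0^3 + (-2)*e^7*c^3*s0 + (-2)*e^7*c^3*s0*c0^2 + (-2)*e^7*c^3*s0^3 + (2)*e^7*s*c0 + (2)*e^7*s*s0^2*c0 + (2)*e^7*s*c^2*c0 + (2)*e^7*s*c^2*c0^3 + (2)*e^7*s*c^2*s0^2*c0 + (2)*e^8*s0*c0 + (2)*e^8*s0^3*c0 + (-2)*e^8*c^2*s0*c0 + (2)*e^8*c^2*s0*c0^3 + (-2)*e^8*c^2*s0^3*c0 + (2)*e^8*s*c*c0^2 + (4)*e^8*s*c*s0^2*c0^2) * h0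
    have hC : (1 - e ^ 2) ^ 2 / H₀ ^ 2 * s *
        (-2 * c / (1 + e * (c * c0 + s * s0)) ^ 2
          + (4 * c + e * ((2 * c ^ 2 - 1) * c0 + 2 * s * c * s0 + 3 * c0)) /
            (1 + e * (c * c0 + s * s0)) ^ 3)
        = (q1c * (c * c0 - -s * s0) * (1 + e * (c * c0 + s * s0))
          - (q1c * (s * c0 - c * s0) + q0c) * (e * (-s * c0 + c * s0)))
          / (1 + e * (c * c0 + s * s0)) ^ 2
        + (q2c * (c * c0 - -s * s0) * (1 + e * (c * c0 + s * s0)) ^ 2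
          - (q2c * (s * c0 - c * s0) + q3c) *
            ((2:ℝ) * (1 + e * (c * c0 + s * s0)) ^ 1 * (e * (-s * c0 + c * s0))))
          / ((1 + e * (c * c0 + s * s0)) ^ 2) ^ 2 := by
      rw [hq1c, hq0c, hq2c, hq3c]
      set_option maxRecDepth 100000 in
      linear_combination (norm := skip) (-1 / (e ^ 2 * H₀ ^ 2 * (1 + e * (c * c0 + s * s0)) ^ 4)) * hCkey
      field_simp
      ring
    calc s / (8 * Q) *
        (4 + (-1 + e ^ 2) ^ 3 / (H₀ ^ 3 * (1 + e * (c * c0 + s * s0)) ^ 3) +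
            16 * H₀ * c * (1 + e * (c * c0 + s * s0)) / (-1 + e ^ 2) *
              (1 - (-1 + e ^ 2) ^ 3 / (8 * H₀ ^ 3 * (1 + e * (c * c0 + s * s0)) ^ 3)) +
          4 * H₀ * (4 * c + e * ((2 * c ^ 2 - 1) * c0 + 2 * s * c * s0 + 3 * c0)) / (-1 + e ^ 2) *
            (1 + (-1 + e ^ 2) ^ 3 / (4 * H₀ ^ 3 * (1 + e * (c * c0 + s * s0)) ^ 3)))
        = (s * (4 + 16 * H₀ * c * (1 + e * (c * c0 + s * s0)) / (-1 + e ^ 2)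
            + 4 * H₀ * (4 * c + e * ((2 * c ^ 2 - 1) * c0 + 2 * s * c * s0 + 3 * c0)) /
              (-1 + e ^ 2))
          + s * (-1 + e ^ 2) ^ 3 / (H₀ ^ 3 * (1 + e * (c * c0 + s * s0)) ^ 3)
          + (1 - e ^ 2) ^ 2 / H₀ ^ 2 * s *
            (-2 * c / (1 + e * (c * c0 + s * s0)) ^ 2
              + (4 * c + e * ((2 * c ^ 2 - 1) * c0 + 2 * s * c * s0 + 3 * c0)) /
                (1 + e * (c * c0 + s * s0)) ^ 3)) / (8 * Q) := by
          have h16 : 16 * H₀ * c * (1 + e * (c * c0 + s * s0)) / (-1 + e ^ 2) *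
              (1 - (-1 + e ^ 2) ^ 3 / (8 * H₀ ^ 3 * (1 + e * (c * c0 + s * s0)) ^ 3))
              = 16 * H₀ * c * (1 + e * (c * c0 + s * s0)) / (-1 + e ^ 2)
                - 2 * c * (1 - e ^ 2) ^ 2 / H₀ ^ 2 / (1 + e * (c * c0 + s * s0)) ^ 2 := by
            field_simp
            ring
          have h4 : 4 * H₀ * (4 * c + e * ((2 * c ^ 2 - 1) * c0 + 2 * s * c * s0 + 3 * c0)) /
                (-1 + e ^ 2) *
              (1 + (-1 + e ^ 2) ^ 3 / (4 * H₀ ^ 3 * (1 + e * (c * c0 + s * s0)) ^ 3))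
              = 4 * H₀ * (4 * c + e * ((2 * c ^ 2 - 1) * c0 + 2 * s * c * s0 + 3 * c0)) /
                  (-1 + e ^ 2)
                + (4 * c + e * ((2 * c ^ 2 - 1) * c0 + 2 * s * c * s0 + 3 * c0)) *
                  (1 - e ^ 2) ^ 2 / H₀ ^ 2 / (1 + e * (c * c0 + s * s0)) ^ 3 := by
            field_simp
            ring
          rw [h16, h4]
          ring
      _ = _ := by
          rw [hA, hB, hC]
          ring
  have hDpos' : ∀ θ : ℝ, (0:ℝ) < 1 + e * Real.cos (θ - θ₀) := by
    intro θ
    nlinarith [Real.neg_one_le_cos (θ - θ₀), Real.cos_le_one (θ - θ₀)]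
  have hcont : Continuous G₂ := by
    have hGfun : G₂ = fun θ => Real.sin θ / (8 * Q) *
      ((4 + (-1 + e ^ 2) ^ 3 / (H₀ ^ 3 * (1 + e * Real.cos (θ - θ₀)) ^ 3)
          + 16 * H₀ * Real.cos θ * (1 + e * Real.cos (θ - θ₀)) / (-1 + e ^ 2) *
            (1 - (-1 + e ^ 2) ^ 3 / (8 * H₀ ^ 3 * (1 + e * Real.cos (θ - θ₀)) ^ 3)))
        + 4 * H₀ * (4 * Real.cos θ + e * (Real.cos (2 * θ - θ₀) + 3 * c0)) /
            (-1 + e ^ 2) *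
            (1 + (-1 + e ^ 2) ^ 3 / (4 * H₀ ^ 3 * (1 + e * Real.cos (θ - θ₀)) ^ 3))) :=
      funext hG₂
    rw [hGfun]
    have hden : ∀ θ : ℝ, H₀ ^ 3 * (1 + e * Real.cos (θ - θ₀)) ^ 3 ≠ 0 := fun θ =>
      mul_ne_zero (pow_ne_zero _ hHne) (pow_ne_zero _ (ne_of_gt (hDpos' θ)))
    have hden8 : ∀ θ : ℝ, 8 * H₀ ^ 3 * (1 + e * Real.cos (θ - θ₀)) ^ 3 ≠ 0 := fun θ =>
      mul_ne_zero (mul_ne_zero (by norm_num) (pow_ne_zero _ hHne))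
        (pow_ne_zero _ (ne_of_gt (hDpos' θ)))
    have hden4 : ∀ θ : ℝ, 4 * H₀ ^ 3 * (1 + e * Real.cos (θ - θ₀)) ^ 3 ≠ 0 := fun θ =>
      mul_ne_zero (mul_ne_zero (by norm_num) (pow_ne_zero _ hHne))
        (pow_ne_zero _ (ne_of_gt (hDpos' θ)))
    refine Continuous.mul (Continuous.div_const (by fun_prop) _) ?_
    refine Continuous.add (Continuous.add (Continuous.add continuous_const ?_) ?_) ?_
    · exact Continuous.div continuous_const (by fun_prop) hden
    · exact Continuous.mul (Continuous.div_const (by fun_prop) _)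
        (Continuous.sub continuous_const (Continuous.div continuous_const (by fun_prop) hden8))
    · exact Continuous.mul (Continuous.div_const (by fun_prop) _)
        (Continuous.add continuous_const (Continuous.div continuous_const (by fun_prop) hden4))
  rw [intervalIntegral.integral_eq_sub_of_hasDerivAt (fun x _ => hderiv x)
    (hcont.intervalIntegrable 0 (2 * π))]
  rw [hF]
  simp only [Real.cos_two_pi, Real.sin_two_pi, Real.cos_zero, Real.sin_zero, mul_zero, zero_mul,
    mul_one, one_mul, add_zero, zero_add, sub_zero, zero_sub]
  have hπ := Real.pi_ne_zero
  rw [ha3]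
  field_simp
  ring
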